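/- The monoid ⟨a, b | ab = a⟩ is an automaton monoid. Precisely, let Γ = {𝟙, a, b} and let N̄ : Γ×Γ → Γ×Γ be defined by N̄(a,b) = (𝟙,a), N̄(a,𝟙) = (𝟙,a), N̄(b,𝟙) = (𝟙,b), and N̄(x,y) = (x,y) for all other pairs. Then for all words u, v over Γ, the production functions σ_u and σ_v are equal as functions List Γ → List Γ if and only if (u, v) lies in the monoid congruence on the free monoid over Γ generated by the pairs ([𝟙], ε) and ([a,b], [a]); hence the monoid generated by this Mealy automaton is isomorphic to the monoid presented by ⟨a, b | ab = a⟩. -/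

import Mathlib

namespace Stmt14

variable {α : Type}

/-- Production function of the Mealy automaton associated with
`N̄(a,b) = (τ_a(b), σ_b(a))`: `σ_x([]) = []`,
`σ_x(i :: s) = σ_x(i) :: σ_{τ_i(x)}(s)`. -/
def prodFn (Nb : α → α → α × α) : α → List α → List α
  | _, [] => []
  | x, i :: s => (Nb i x).2 :: prodFn Nb ((Nb i x).1) s

/-- Production function of a word `u = x₁⋯xₙ`: `σ_u = σ_{xₙ} ∘ ⋯ ∘ σ_{x₁}`. -/
def prodWord (Nb : α → α → α × α) : List α → List α → List α
  | [], s => s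
  | x :: u, s => prodWord Nb u (prodFn Nb x s)

/-- The alphabet `Γ = {𝟙, a, b}`. -/
inductive Γ : Type
  | one : Γ
  | a : Γ
  | b : Γ
  deriving DecidableEq

instance : Fintype Γ where
  elems := {Γ.one, Γ.a, Γ.b}
  complete := by intro x; cases x <;> simp

/-- The two-letter normalisation of the monoid `⟨a, b | ab = a⟩`:
`N̄(a,b) = (𝟙,a)`, `N̄(a,𝟙) = (𝟙,a)`, `N̄(b,𝟙) = (𝟙,b)`, identity otherwise. -/
def bsNb : Γ → Γ → Γ × Γ
  | .a, .b => (.one, .a)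
  | .a, .one => (.one, .a)
  | .b, .one => (.one, .b)
  | x, y => (x, y)

/-- The defining relations of `⟨a, b | ab = a⟩` with an adjoined unit letter `𝟙`:
`[𝟙] ~ ε` and `[a,b] ~ [a]`. -/
def bsRel : FreeMonoid Γ → FreeMonoid Γ → Prop :=
  fun u v =>
    (u = FreeMonoid.ofList [Γ.one] ∧ v = 1) ∨
      (u = FreeMonoid.ofList [Γ.a, Γ.b] ∧ v = FreeMonoid.ofList [Γ.a])

open List FreeMonoid

/-! ### Auxiliary computations of the production functions -/

lemma prodWord_append (Nb : α → α → α × α) (u v s : List α) :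
    prodWord Nb (u ++ v) s = prodWord Nb v (prodWord Nb u s) := by
  induction u generalizing s with
  | nil => rfl
  | cons x u ih => simp [prodWord, ih]

lemma prodFn_one : ∀ s, prodFn bsNb Γ.one s = s
  | [] => rfl
  | i :: s => by cases i <;> simp [prodFn, bsNb, prodFn_one s]

lemma prodFn_b_a (t : List Γ) : prodFn bsNb Γ.b (Γ.a :: t) = Γ.a :: t := by
  simp [prodFn, bsNb, prodFn_one]

lemma prodFn_ba (s : List Γ) :
    prodFn bsNb Γ.b (prodFn bsNb Γ.a s) = prodFn bsNb Γ.a s := by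
  match s with
  | [] => rfl
  | i :: t => cases i <;> simp [prodFn, bsNb, prodFn_one]

lemma prodFn_b_pref (j : ℕ) (t : List Γ) :
    prodFn bsNb Γ.b (replicate j Γ.b ++ Γ.one :: t) = replicate (j + 1) Γ.b ++ t := by
  induction j with
  | zero => simp [prodFn, bsNb, prodFn_one]
  | succ j ih =>
    rw [replicate_succ, cons_append]
    simp only [prodFn, bsNb]
    rw [ih]
    simp [replicate_succ]

lemma prodFn_a_pref (p k M : ℕ) :
    prodFn bsNb Γ.a (replicate p Γ.a ++ replicate k Γ.b ++ replicate (M + 1) Γ.one) =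
      replicate (p + 1) Γ.a ++ replicate k Γ.b ++ replicate M Γ.one := by
  induction p with
  | zero =>
    cases k with
    | zero => simp [prodFn, bsNb, prodFn_one, replicate_succ]
    | succ j =>
      simp only [replicate, nil_append, cons_append, replicate_succ]
      simp only [prodFn, bsNb]
      rw [prodFn_b_pref j (replicate M Γ.one)]
      simp [replicate_succ]
  | succ p ih =>
    rw [replicate_succ, cons_append, cons_append]
    simp only [prodFn, bsNb]
    rw [ih]
    simp [replicate_succ]

lemma evalB (k j M : ℕ) :
    prodWord bsNb (replicate k Γ.b) (replicate j Γ.b ++ replicate (k + M) Γ.one) =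
      replicate (j + k) Γ.b ++ replicate M Γ.one := by
  induction k generalizing j with
  | zero => simp [prodWord]
  | succ k ih =>
    rw [replicate_succ]
    simp only [prodWord]
    rw [show k + 1 + M = (k + M) + 1 by omega, replicate_succ, prodFn_b_pref, ih (j + 1)]
    rw [show j + 1 + k = j + (k + 1) by omega]

lemma evalA (m p k M : ℕ) :
    prodWord bsNb (replicate m Γ.a)
        (replicate p Γ.a ++ replicate k Γ.b ++ replicate (m + M) Γ.one) =
      replicate (p + m) Γ.a ++ replicate k Γ.b ++ replicate M Γ.one := by
  induction m generalizing p with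
  | zero => simp [prodWord]
  | succ m ih =>
    rw [replicate_succ]
    simp only [prodWord]
    rw [show m + 1 + M = (m + M) + 1 by omega, prodFn_a_pref p k (m + M), ih (p + 1)]
    rw [show p + 1 + m = p + (m + 1) by omega]

lemma prodWord_b_fix (k : ℕ) (t : List Γ) :
    prodWord bsNb (replicate k Γ.b) (Γ.a :: t) = Γ.a :: t := by
  induction k with
  | zero => rfl
  | succ k ih => rw [replicate_succ]; simp only [prodWord]; rw [prodFn_b_a, ih]

/-! ### Normal forms -/

/-- Canonical form `(k, m)` standing for `b^k a^m`. -/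
def canon : List Γ → ℕ × ℕ
  | [] => (0, 0)
  | Γ.one :: u => canon u
  | Γ.a :: u => (0, (canon u).2 + 1)
  | Γ.b :: u => ((canon u).1 + 1, (canon u).2)

/-- The word `b^k a^m`. -/
def word (p : ℕ × ℕ) : List Γ := replicate p.1 Γ.b ++ replicate p.2 Γ.a

lemma eval_word (k m M : ℕ) :
    prodWord bsNb (word (k, m)) (replicate (k + m + M) Γ.one) =
      replicate m Γ.a ++ replicate k Γ.b ++ replicate M Γ.one := by
  unfold word
  rw [prodWord_append]
  have h1 : prodWord bsNb (replicate k Γ.b) (replicate (k + m + M) Γ.one) =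
      replicate k Γ.b ++ replicate (m + M) Γ.one := by
    have := evalB k 0 (m + M)
    rw [show k + (m + M) = k + m + M by omega] at this
    simpa using this
  rw [h1]
  have := evalA m 0 k M
  simpa using this

lemma count_aux (x : Γ) (n k M : ℕ) :
    List.count x (replicate n Γ.a ++ replicate k Γ.b ++ replicate M Γ.one) =
      if x = Γ.a then n else if x = Γ.b then k else M := by
  cases x <;> simp [List.count_append, List.count_replicate]

lemma word_inj (p q : ℕ × ℕ)
    (h : prodWord bsNb (word p) = prodWord bsNb (word q)) : p = q := by
  obtain ⟨k, m⟩ := p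
  obtain ⟨k', m'⟩ := q
  have h2 := congrFun h (replicate (k + m + (k' + m')) Γ.one)
  rw [eval_word k m (k' + m')] at h2
  rw [show k + m + (k' + m') = k' + m' + (k + m) by omega, eval_word k' m' (k + m)] at h2
  have ha := congrArg (List.count Γ.a) h2
  have hb := congrArg (List.count Γ.b) h2
  rw [count_aux, count_aux] at ha
  rw [count_aux, count_aux] at hb
  simp at ha hb
  simp [ha, hb]

/-! ### Congruence lemmas -/

lemma cg_cons {u v : List Γ} (x : Γ)
    (h : conGen bsRel (ofList u) (ofList v)) :
    conGen bsRel (ofList (x :: u)) (ofList (x :: v)) := by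
  simpa [FreeMonoid.ofList_cons] using
    (conGen bsRel).mul ((conGen bsRel).refl (FreeMonoid.of x)) h

lemma cg_one (u : List Γ) :
    conGen bsRel (ofList (Γ.one :: u)) (ofList u) := by
  have h1 : conGen bsRel (ofList [Γ.one]) 1 := ConGen.Rel.of _ _ (Or.inl ⟨rfl, rfl⟩)
  simpa using (conGen bsRel).mul h1 ((conGen bsRel).refl (ofList u))

lemma cg_ab (u : List Γ) :
    conGen bsRel (ofList (Γ.a :: Γ.b :: u)) (ofList (Γ.a :: u)) := by
  have h1 : conGen bsRel (ofList [Γ.a, Γ.b]) (ofList [Γ.a]) :=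
    ConGen.Rel.of _ _ (Or.inr ⟨rfl, rfl⟩)
  simpa [mul_assoc] using (conGen bsRel).mul h1 ((conGen bsRel).refl (ofList u))

lemma cg_aBk (k : ℕ) :
    conGen bsRel (ofList (Γ.a :: replicate k Γ.b)) (ofList [Γ.a]) := by
  induction k with
  | zero => exact (conGen bsRel).refl _
  | succ k ih =>
    rw [replicate_succ]
    exact (conGen bsRel).trans (cg_ab (replicate k Γ.b)) ih

lemma cg_canon (u : List Γ) :
    conGen bsRel (ofList u) (ofList (word (canon u))) := by
  induction u with
  | nil => exact (conGen bsRel).refl _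
  | cons x u ih =>
    cases x with
    | one => exact (conGen bsRel).trans (cg_one u) ih
    | b =>
      have h := cg_cons Γ.b ih
      have : word (canon (Γ.b :: u)) = Γ.b :: word (canon u) := by
        simp [word, canon, replicate_succ]
      rw [this]
      exact h
    | a =>
      refine (conGen bsRel).trans (cg_cons Γ.a ih) ?_
      have heq : Γ.a :: word (canon u) =
          (Γ.a :: replicate (canon u).1 Γ.b) ++ replicate (canon u).2 Γ.a := by
        simp [word]
      rw [heq]
      have h2 : conGen bsRel
          (ofList ((Γ.a :: replicate (canon u).1 Γ.b) ++ replicate (canon u).2 Γ.a))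
          (ofList ([Γ.a] ++ replicate (canon u).2 Γ.a)) := by
        rw [ofList_append, ofList_append]
        exact (conGen bsRel).mul (cg_aBk (canon u).1)
          ((conGen bsRel).refl (ofList (replicate (canon u).2 Γ.a)))
      refine (conGen bsRel).trans h2 ?_
      have : ([Γ.a] ++ replicate (canon u).2 Γ.a : List Γ) = word (canon (Γ.a :: u)) := by
        simp [word, canon, replicate_succ]
      rw [this]
      exact (conGen bsRel).refl _

/-! ### Soundness -/

lemma sound {x y : FreeMonoid Γ} (h : conGen bsRel x y) :
    prodWord bsNb x.toList = prodWord bsNb y.toList := by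
  induction h with
  | of x y hxy =>
    rcases hxy with ⟨hx, hy⟩ | ⟨hx, hy⟩
    · subst hx; subst hy
      funext s
      show prodWord bsNb [Γ.one] s = prodWord bsNb [] s
      simp [prodWord, prodFn_one, FreeMonoid.toList]
    · subst hx; subst hy
      funext s
      show prodWord bsNb [Γ.a, Γ.b] s = prodWord bsNb [Γ.a] s
      simp only [prodWord]
      rw [prodFn_ba]
  | refl => rfl
  | symm _ ih => exact ih.symm
  | trans _ _ ih1 ih2 => exact ih1.trans ih2
  | mul _ _ ih1 ih2 =>
    funext s
    show prodWord bsNb (_ ++ _) s = prodWord bsNb (_ ++ _) s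
    rw [prodWord_append, prodWord_append, ih1, ih2]

/-- Example `ex-bsOneZero`: the monoid `⟨a, b | ab = a⟩` is an
automaton monoid: two words over `Γ = {𝟙, a, b}` induce the same production function of
the Mealy automaton iff they are congruent modulo the relations `𝟙 = ε` and `ab = a`;
hence the monoid generated by this Mealy automaton is isomorphic to `⟨a, b | ab = a⟩`. -/
theorem bsOneZero_automaton_monoid :
    ∀ u v : List Γ, prodWord bsNb u = prodWord bsNb v ↔
      conGen bsRel (FreeMonoid.ofList u) (FreeMonoid.ofList v) := by
  intro u v
  constructor
  · intro h
    have hu := cg_canon u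
    have hv := cg_canon v
    have h1 : prodWord bsNb u = prodWord bsNb (word (canon u)) := sound hu
    have h2 : prodWord bsNb v = prodWord bsNb (word (canon v)) := sound hv
    have hcanon : canon u = canon v := word_inj _ _ (by rw [← h1, ← h2, h])
    rw [hcanon] at hu
    exact (conGen bsRel).trans hu ((conGen bsRel).symm hv)
  · intro h
    exact sound h

end Stmt14
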